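/- For all φ₁, φ₂ > 0 with φ := φ₁ + φ₂, the two-colour single-site measure ν_{φ₁,φ₂} is a probability measure on ℕ × ℕ, and its pushforward under the map (k,m) ↦ k + m equals μ_φ; that is, for every n ∈ ℕ, ∑_{k+m=n} ν_{φ₁,φ₂}({(k,m)}) = φ^n / (Z(φ) c(n)!). In other words, the two-colour invariant measure contracts to the colour-blind invariant measure. -/

import Mathlib

noncomputable section

/-- `c(k)! = ∏_{m=1}^k c(m)`, with `c(0)! = 1`. -/
def cfact (c : ℕ → ℝ) : ℕ → ℝ
  | 0 => 1
  | k + 1 => cfact c k * c (k + 1)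

/-- The partition function `Z(φ) = ∑_{k ≥ 0} φ^k / c(k)!`. -/
def Zfun (c : ℕ → ℝ) (φ : ℝ) : ℝ := ∑' k : ℕ, φ ^ k / cfact c k

/-- The grand canonical single-site measure `μ_φ({k}) = φ^k / (Z(φ) c(k)!)`. -/
def mu (c : ℕ → ℝ) (φ : ℝ) (k : ℕ) : ℝ := φ ^ k / (Zfun c φ * cfact c k)

/-- The two-colour single-site measure
`ν_{φ₁,φ₂}({(k,m)}) = φ₁^k φ₂^m binom(k+m,k) / (c(k+m)! Z(φ₁+φ₂))`. -/
def nu2 (c : ℕ → ℝ) (φ₁ φ₂ : ℝ) (p : ℕ × ℕ) : ℝ :=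
  φ₁ ^ p.1 * φ₂ ^ p.2 * ((p.1 + p.2).choose p.1 : ℝ) /
    (cfact c (p.1 + p.2) * Zfun c (φ₁ + φ₂))

/-- For all `φ₁, φ₂ > 0` with `φ = φ₁ + φ₂`, the two-colour single-site
measure `ν_{φ₁,φ₂}` is a probability measure on `ℕ × ℕ`, and its pushforward under
`(k,m) ↦ k + m` equals `μ_φ`: for every `n`, `∑_{k+m=n} ν_{φ₁,φ₂}({(k,m)}) = φ^n/(Z(φ) c(n)!)`. -/
theorem stmt5 (c : ℕ → ℝ) (a₁ a₂ : ℝ) (k₀ : ℕ)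
    (hc0 : c 0 = 0) (hcpos : ∀ k : ℕ, 1 ≤ k → 0 < c k)
    (hLG : ∀ k : ℕ, |c (k + 1) - c k| ≤ a₁)
    (hk₀ : 1 ≤ k₀) (ha₂ : 0 < a₂)
    (hM : ∀ k : ℕ, a₂ ≤ c (k + k₀) - c k)
    (φ₁ φ₂ : ℝ) (h₁ : 0 < φ₁) (h₂ : 0 < φ₂) :
    (∀ p : ℕ × ℕ, 0 ≤ nu2 c φ₁ φ₂ p) ∧
    Summable (fun p : ℕ × ℕ => nu2 c φ₁ φ₂ p) ∧
    (∑' p : ℕ × ℕ, nu2 c φ₁ φ₂ p) = 1 ∧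
    ∀ n : ℕ, (∑ k ∈ Finset.range (n + 1), nu2 c φ₁ φ₂ (k, n - k)) =
      (φ₁ + φ₂) ^ n / (Zfun c (φ₁ + φ₂) * cfact c n) := by
  set φ := φ₁ + φ₂ with hφdef
  have hφ : 0 < φ := by positivity
  -- positivity of cfact
  have hcf : ∀ n, 0 < cfact c n := by
    intro n; induction n with
    | zero => norm_num [cfact]
    | succ k ih => exact mul_pos ih (hcpos (k + 1) (by omega))
  have hcnn : ∀ k, 0 ≤ c k := by
    intro k; cases k with
    | zero => simp [hc0]
    | succ k => exact (hcpos (k + 1) (by omega)).le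
  -- growth of c
  have hstep : ∀ k m : ℕ, c k + m * a₂ ≤ c (k + m * k₀) := by
    intro k m; induction m with
    | zero => simp
    | succ m ih =>
      have h := hM (k + m * k₀)
      have harg : k + (m + 1) * k₀ = k + m * k₀ + k₀ := by ring
      rw [harg]
      push_cast
      linarith
  have hgrow : ∀ B : ℝ, ∃ N : ℕ, ∀ n ≥ N, B ≤ c n := by
    intro B
    obtain ⟨m, hm⟩ := exists_nat_ge (B / a₂)
    refine ⟨m * k₀, fun n hn => ?_⟩
    have hBm : B ≤ m * a₂ := by
      rw [div_le_iff₀ ha₂] at hm; linarith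
    have := hstep (n - m * k₀) m
    rw [Nat.sub_add_cancel hn] at this
    have := hcnn (n - m * k₀)
    linarith
  -- summability of the partition function series
  have hsum : ∀ ψ : ℝ, 0 < ψ → Summable (fun n => ψ ^ n / cfact c n) := by
    intro ψ hψ
    obtain ⟨N, hN⟩ := hgrow (2 * ψ)
    refine summable_of_ratio_norm_eventually_le (r := 1 / 2) (by norm_num) ?_
    filter_upwards [Filter.eventually_ge_atTop N] with n hn
    have hc1 : 2 * ψ ≤ c (n + 1) := hN (n + 1) (by omega)
    have hc1pos : 0 < c (n + 1) := hcpos (n + 1) (by omega)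
    have hnn1 : (0:ℝ) ≤ ψ ^ (n + 1) / cfact c (n + 1) :=
      div_nonneg (pow_nonneg hψ.le _) (hcf _).le
    have hnn0 : (0:ℝ) ≤ ψ ^ n / cfact c n :=
      div_nonneg (pow_nonneg hψ.le _) (hcf _).le
    have h1 : ψ ^ (n + 1) / cfact c (n + 1) = (ψ / c (n + 1)) * (ψ ^ n / cfact c n) := by
      show ψ ^ (n + 1) / (cfact c n * c (n + 1)) = _
      have := (hcf n).ne'
      field_simp
      ring
    rw [Real.norm_eq_abs, Real.norm_eq_abs,
      abs_of_nonneg hnn1, abs_of_nonneg hnn0, h1]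
    have hr : ψ / c (n + 1) ≤ 1 / 2 := by
      rw [div_le_div_iff₀ hc1pos (by norm_num)]; linarith
    exact mul_le_mul_of_nonneg_right hr hnn0
  have hsumφ := hsum φ hφ
  -- Z ≥ 1
  have hZ1 : 1 ≤ Zfun c φ := by
    have := Summable.le_tsum hsumφ 0 (fun j _ => div_nonneg (pow_nonneg hφ.le _) (hcf _).le)
    simpa [cfact, Zfun] using this
  have hZpos : 0 < Zfun c φ := lt_of_lt_of_le one_pos hZ1
  -- HasSum for mu
  have hmuHS : HasSum (fun n => φ ^ n / (Zfun c φ * cfact c n)) 1 := by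
    have h := (hsumφ.hasSum).div_const (Zfun c φ)
    have hZeq : (∑' b : ℕ, φ ^ b / cfact c b) = Zfun c φ := rfl
    rw [hZeq, div_self hZpos.ne'] at h
    have hfe : (fun n => φ ^ n / (Zfun c φ * cfact c n)) =
        fun i => φ ^ i / cfact c i / Zfun c φ := by
      funext n; rw [div_div, mul_comm]
    rw [hfe]; exact h
  -- fiber identity
  have hfiber : ∀ n : ℕ, (∑ k ∈ Finset.range (n + 1), nu2 c φ₁ φ₂ (k, n - k)) =
      φ ^ n / (Zfun c φ * cfact c n) := by
    intro n
    have h1 : ∀ k ∈ Finset.range (n + 1), nu2 c φ₁ φ₂ (k, n - k) =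
        φ₁ ^ k * φ₂ ^ (n - k) * (n.choose k : ℝ) / (cfact c n * Zfun c φ) := by
      intro k hk
      have hk' : k + (n - k) = n := by
        rw [Finset.mem_range] at hk; omega
      simp only [nu2, hk']
      rfl
    rw [Finset.sum_congr rfl h1, ← Finset.sum_div, ← add_pow]
    rw [mul_comm (cfact c n)]
  -- nonnegativity
  have hnn : ∀ p : ℕ × ℕ, 0 ≤ nu2 c φ₁ φ₂ p := by
    intro p
    exact div_nonneg
      (by positivity)
      (mul_nonneg (hcf _).le hZpos.le)
  -- antidiagonal sums
  have hanti : ∀ n : ℕ, (∑ p ∈ Finset.HasAntidiagonal.antidiagonal n, nu2 c φ₁ φ₂ p) =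
      φ ^ n / (Zfun c φ * cfact c n) := by
    intro n
    rw [Finset.Nat.sum_antidiagonal_eq_sum_range_succ_mk]
    exact hfiber n
  -- partial sums bounded by 1
  have htri : ∀ s : Finset (ℕ × ℕ), (∑ p ∈ s, nu2 c φ₁ φ₂ p) ≤ 1 := by
    intro s
    set N := (s.sup fun p => p.1 + p.2) + 1 with hN
    have hsub : s ⊆ (Finset.range N).biUnion (fun n => Finset.HasAntidiagonal.antidiagonal n) := by
      intro p hp
      rw [Finset.mem_biUnion]
      have hle : p.1 + p.2 ≤ s.sup fun p => p.1 + p.2 :=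
        Finset.le_sup (f := fun p : ℕ × ℕ => p.1 + p.2) hp
      exact ⟨p.1 + p.2, Finset.mem_range.2 (by omega),
        Finset.HasAntidiagonal.mem_antidiagonal.2 rfl⟩
    have hdis : Set.PairwiseDisjoint (↑(Finset.range N) : Set ℕ)
        (fun n => Finset.HasAntidiagonal.antidiagonal n) := by
      intro i _ j _ hij
      refine Finset.disjoint_left.2 fun p hpi hpj => hij ?_
      simp only [Finset.HasAntidiagonal.mem_antidiagonal] at hpi hpj
      omega
    calc (∑ p ∈ s, nu2 c φ₁ φ₂ p)
        ≤ ∑ p ∈ (Finset.range N).biUnion (fun n => Finset.HasAntidiagonal.antidiagonal n),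
            nu2 c φ₁ φ₂ p := Finset.sum_le_sum_of_subset_of_nonneg hsub (fun p _ _ => hnn p)
      _ = ∑ n ∈ Finset.range N, ∑ p ∈ Finset.HasAntidiagonal.antidiagonal n, nu2 c φ₁ φ₂ p :=
          Finset.sum_biUnion hdis
      _ = ∑ n ∈ Finset.range N, φ ^ n / (Zfun c φ * cfact c n) := by
          exact Finset.sum_congr rfl fun n _ => hanti n
      _ ≤ 1 := by
          have := Summable.sum_le_tsum (Finset.range N)
            (fun n _ => div_nonneg (pow_nonneg hφ.le _) (mul_nonneg hZpos.le (hcf _).le)) hmuHS.summable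
          rwa [hmuHS.tsum_eq] at this
  have hsummable : Summable (fun p : ℕ × ℕ => nu2 c φ₁ φ₂ p) :=
    summable_of_sum_le hnn htri
  -- tsum = 1
  have htsum : (∑' p : ℕ × ℕ, nu2 c φ₁ φ₂ p) = 1 := by
    have hle : (∑' p : ℕ × ℕ, nu2 c φ₁ φ₂ p) ≤ 1 := Summable.tsum_le_of_sum_le hsummable htri
    have hge : 1 ≤ ∑' p : ℕ × ℕ, nu2 c φ₁ φ₂ p := by
      have htend := hmuHS.tendsto_sum_nat
      refine le_of_tendsto htend (Filter.Eventually.of_forall fun N => ?_)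
      have heq : (∑ n ∈ Finset.range N, φ ^ n / (Zfun c φ * cfact c n)) =
          ∑ p ∈ (Finset.range N).biUnion (fun n => Finset.HasAntidiagonal.antidiagonal n),
            nu2 c φ₁ φ₂ p := by
        rw [Finset.sum_biUnion]
        · exact (Finset.sum_congr rfl fun n _ => (hanti n).symm)
        · intro i _ j _ hij
          refine Finset.disjoint_left.2 fun p hpi hpj => hij ?_
          simp only [Finset.HasAntidiagonal.mem_antidiagonal] at hpi hpj
          omega
      rw [heq]
      exact Summable.sum_le_tsum _ (fun p _ => hnn p) hsummable
    linarith
  exact ⟨hnn, hsummable, htsum, hfiber⟩
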